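/- Assume (A1)–(A3). Define Z_n := f̂(Φ_n), Ξ_1 = Z_1, and Ξ_{n+1} = Ξ_n + (1/(n+1))( A Ξ_n − (1/n)(I+A) Z_{n+1} ) for n ≥ 1. Suppose λ = −ϱ₀ + u·i is an eigenvalue of A with 0 < ϱ₀ < 1/2, let v ∈ ℂ^d be a nonzero left eigenvector (vᵀ A = λ vᵀ), and suppose Σ_Δ v ≠ 0. Then limsup_{n→∞} n^{2ϱ₀} E[|vᵀ Ξ_n|²] < ∞. -/

import Mathlib

open MeasureTheory ProbabilityTheory Filter Matrix
open scoped ENNReal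

noncomputable section

attribute [local instance] Matrix.normedAddCommGroup

/-- One-step transition operator of a Markov kernel acting on real-valued functions:
`(Pop P g)(z) = ∫ g(y) P(z, dy)`. -/
def Pop {Z : Type*} [MeasurableSpace Z] (P : Kernel Z Z) (g : Z → ℝ) (z : Z) : ℝ :=
  ∫ y, g y ∂(P z)

/-- `n`-step transition operator `Pⁿ`. -/
def Pn {Z : Type*} [MeasurableSpace Z] (P : Kernel Z Z) : ℕ → (Z → ℝ) → Z → ℝ
  | 0 => fun g => g
  | n + 1 => fun g => Pop P (Pn P n g)

/-- `g ∈ L∞^V` : `|g|` is bounded by a constant multiple of `V`. -/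
def BddV {Z : Type*} (V g : Z → ℝ) : Prop :=
  ∃ C : ℝ, ∀ z, |g z| ≤ C * V z

/-- `V`-uniform ergodicity of the kernel `P` with invariant probability measure `π`:
there are `ρ ∈ (0,1)` and `B < ∞` such that `|Pⁿg(z) − π(g)| ≤ B ‖g‖_V ρⁿ V(z)`. -/
def VUniformlyErgodic {Z : Type*} [MeasurableSpace Z] (P : Kernel Z Z) (π : Measure Z)
    (V : Z → ℝ) : Prop :=
  ∃ ρ B : ℝ, ρ ∈ Set.Ioo (0 : ℝ) 1 ∧ 0 ≤ B ∧
    ∀ (g : Z → ℝ) (C : ℝ), Measurable g → (∀ z, |g z| ≤ C * V z) →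
      ∀ (n : ℕ) (z : Z), |Pn P n g z - ∫ x, g x ∂π| ≤ B * C * ρ ^ n * V z

/-- Cross-moment matrix `E[X Yᵀ]`. -/
def crossMat {Ω : Type*} [MeasurableSpace Ω] (μ : Measure Ω) {d : ℕ}
    (X Y : Ω → Fin d → ℝ) : Matrix (Fin d) (Fin d) ℝ :=
  Matrix.of fun i j => ∫ ω, X ω i * Y ω j ∂μ

/-- Covariance-type matrix `E[X Xᵀ]`. -/
def covMat {Ω : Type*} [MeasurableSpace Ω] (μ : Measure Ω) {d : ℕ}
    (X : Ω → Fin d → ℝ) : Matrix (Fin d) (Fin d) ℝ :=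
  crossMat μ X X

/-- `∫∫ (g(z') − Pg(z)) (h(z') − Ph(z))ᵀ P(z, dz') π(dz)`. -/
def steadyCross {Z : Type*} [MeasurableSpace Z] (P : Kernel Z Z) (π : Measure Z) {d : ℕ}
    (g h : Z → Fin d → ℝ) : Matrix (Fin d) (Fin d) ℝ :=
  Matrix.of fun i j =>
    ∫ z, ∫ z', (g z' i - Pop P (fun y => g y i) z) * (h z' j - Pop P (fun y => h y j) z)
      ∂(P z) ∂π

/-- The asymptotic covariance matrix
`Σ_Δ = ∫∫ (f̂(z') − Pf̂(z))(f̂(z') − Pf̂(z))ᵀ P(z, dz') π(dz)`. -/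
def SigmaDelta {Z : Type*} [MeasurableSpace Z] (P : Kernel Z Z) (π : Measure Z) {d : ℕ}
    (fhat : Z → Fin d → ℝ) : Matrix (Fin d) (Fin d) ℝ :=
  steadyCross P π fhat fhat

/-- `E_π[Δ^m Ẑᵀ] = ∫∫ (f̂(z') − Pf̂(z)) f̂̂(z')ᵀ P(z, dz') π(dz)`. -/
def martCrossZ {Z : Type*} [MeasurableSpace Z] (P : Kernel Z Z) (π : Measure Z) {d : ℕ}
    (fhat fhh : Z → Fin d → ℝ) : Matrix (Fin d) (Fin d) ℝ :=
  Matrix.of fun i j =>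
    ∫ z, ∫ z', (fhat z' i - Pop P (fun y => fhat y i) z) * fhh z' j ∂(P z) ∂π

/-- All eigenvalues (over `ℂ`) of the real matrix `A` have real part `< c`. -/
def EigReLT {d : ℕ} (A : Matrix (Fin d) (Fin d) ℝ) (c : ℝ) : Prop :=
  ∀ (l : ℂ) (v : Fin d → ℂ), v ≠ 0 → (A.map Complex.ofReal).mulVec v = l • v → l.re < c

/-- A real square matrix is Hurwitz if all of its eigenvalues have negative real part. -/
def IsHurwitz {d : ℕ} (A : Matrix (Fin d) (Fin d) ℝ) : Prop :=
  EigReLT A 0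


section chain
variable {Z : Type*} [MeasurableSpace Z] (P : Kernel Z Z) [IsMarkovKernel P]

lemma pop_measurable {g : Z → ℝ} (hg : Measurable g) (hb : ∃ c, ∀ z, |g z| ≤ c) :
    Measurable (Pop P g) := by
  have h : StronglyMeasurable (fun p : Z × Z => g p.2) :=
    (hg.comp measurable_snd).stronglyMeasurable
  exact h.integral_kernel_prod_right'.measurable

lemma pop_bdd {g : Z → ℝ} {c : ℝ} (hb : ∀ z, |g z| ≤ c) (z : Z) : |Pop P g z| ≤ c := by
  have h0 : (0:ℝ) ≤ c := le_trans (abs_nonneg _) (hb z)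
  have := norm_integral_le_of_norm_le_const (μ := P z) (f := g) (C := c)
    (Filter.Eventually.of_forall (fun y => by simpa using hb y))
  simpa [Pop, measure_univ] using this

lemma pn_measurable {g : Z → ℝ} {c : ℝ} (hg : Measurable g) (hb : ∀ z, |g z| ≤ c) (n : ℕ) :
    Measurable (Pn P n g) ∧ ∀ z, |Pn P n g z| ≤ c := by
  induction n with
  | zero => exact ⟨hg, hb⟩
  | succ n ih =>
    refine ⟨pop_measurable P ih.1 ⟨c, ih.2⟩, fun z => pop_bdd P ih.2 z⟩

lemma pn_succ_eq (g : Z → ℝ) (n : ℕ) : Pn P (n+1) g = Pn P n (Pop P g) := by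
  induction n with
  | zero => rfl
  | succ n ih => show Pop P (Pn P (n+1) g) = _; rw [ih]; rfl

end chain

section expn
variable {Z : Type*} [MeasurableSpace Z] (P : Kernel Z Z) [IsMarkovKernel P]
  {Ω : Type*} {m0 : MeasurableSpace Ω} (μ : Measure Ω) [IsProbabilityMeasure μ]
  (F : Filtration ℕ m0) (Φ : ℕ → Ω → Z)

lemma markov_step
    (hadapted : ∀ n, Measurable[F n] (Φ n))
    (hMarkov : ∀ (g : Z → ℝ), Measurable g → (∀ z, |g z| ≤ 1) → ∀ n,
      μ[(fun ω => g (Φ (n + 1) ω)) | F n] =ᵐ[μ] fun ω => Pop P g (Φ n ω))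
    (g : Z → ℝ) (c : ℝ) (hg : Measurable g) (hb : ∀ z, |g z| ≤ c) (n : ℕ) :
    ∫ ω, g (Φ (n+1) ω) ∂μ = ∫ ω, Pop P g (Φ n ω) ∂μ := by
  have hΦm : ∀ k, Measurable (Φ k) := fun k => (hadapted k).mono (F.le k) le_rfl
  set c' : ℝ := max c 1 with hc'
  have hc'p : (0:ℝ) < c' := lt_of_lt_of_le one_pos (le_max_right _ _)
  set h : Z → ℝ := fun z => c'⁻¹ * g z with hh
  have hhm : Measurable h := (measurable_const.mul hg)
  have hhb : ∀ z, |h z| ≤ 1 := by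
    intro z
    rw [hh]
    simp only [abs_mul, abs_inv, abs_of_pos hc'p]
    rw [inv_mul_le_iff₀ hc'p]
    have : |g z| ≤ c' := le_trans (hb z) (le_max_left c 1)
    linarith
  have hmk := hMarkov h hhm hhb n
  have h1 : ∫ ω, (μ[(fun ω => h (Φ (n + 1) ω)) | F n]) ω ∂μ
      = ∫ ω, h (Φ (n+1) ω) ∂μ := integral_condExp (F.le n)
  have h2 : ∫ ω, (μ[(fun ω => h (Φ (n + 1) ω)) | F n]) ω ∂μ
      = ∫ ω, Pop P h (Φ n ω) ∂μ := integral_congr_ae hmk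
  have h3 : ∀ z, Pop P h z = c'⁻¹ * Pop P g z := by
    intro z; rw [hh]; simp only [Pop]; exact integral_const_mul _ _
  have h4 : ∫ ω, h (Φ (n+1) ω) ∂μ = c'⁻¹ * ∫ ω, g (Φ (n+1) ω) ∂μ := by
    rw [hh]; exact integral_const_mul _ _
  have h5 : ∫ ω, Pop P h (Φ n ω) ∂μ = c'⁻¹ * ∫ ω, Pop P g (Φ n ω) ∂μ := by
    simp_rw [h3]; exact integral_const_mul _ _
  have := h1.symm.trans h2
  rw [h4, h5] at this
  exact mul_left_cancel₀ (inv_ne_zero (ne_of_gt hc'p)) this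

lemma chain_exp
    (hadapted : ∀ n, Measurable[F n] (Φ n))
    (z0 : Z) (hΦ0 : ∀ ω, Φ 0 ω = z0)
    (hMarkov : ∀ (g : Z → ℝ), Measurable g → (∀ z, |g z| ≤ 1) → ∀ n,
      μ[(fun ω => g (Φ (n + 1) ω)) | F n] =ᵐ[μ] fun ω => Pop P g (Φ n ω))
    (n : ℕ) :
    ∀ (g : Z → ℝ) (c : ℝ), Measurable g → (∀ z, |g z| ≤ c) →
      ∫ ω, g (Φ n ω) ∂μ = Pn P n g z0 := by
  induction n with
  | zero =>
    intro g c hg hb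
    have : (fun ω => g (Φ 0 ω)) = fun _ => g z0 := funext fun ω => by rw [hΦ0]
    rw [this]
    simp [Pn]
  | succ n ih =>
    intro g c hg hb
    rw [pn_succ_eq,
      ← ih (Pop P g) c (pop_measurable P hg ⟨c, hb⟩) (fun z => pop_bdd P hb z)]
    exact markov_step P μ F Φ hadapted hMarkov g c hg hb n
end expn

lemma sup_min_ofReal {a : ℝ} (ha : 0 ≤ a) :
    (⨆ M : ℕ, ENNReal.ofReal (min a (M:ℝ))) = ENNReal.ofReal a := by
  apply le_antisymm
  · exact iSup_le fun M => ENNReal.ofReal_le_ofReal (min_le_left _ _)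
  · obtain ⟨M, hM⟩ := exists_nat_ge a
    refine le_trans (le_of_eq ?_) (le_iSup _ M)
    rw [min_eq_left hM]

section moment
variable {Z : Type*} [MeasurableSpace Z] (P : Kernel Z Z) [IsMarkovKernel P]
  {Ω : Type*} {m0 : MeasurableSpace Ω} (μ : Measure Ω) [IsProbabilityMeasure μ]
  (F : Filtration ℕ m0) (Φ : ℕ → Ω → Z)

lemma moment_bound
    (hadapted : ∀ n, Measurable[F n] (Φ n))
    (z0 : Z) (hΦ0 : ∀ ω, Φ 0 ω = z0)
    (hMarkov : ∀ (g : Z → ℝ), Measurable g → (∀ z, |g z| ≤ 1) → ∀ n,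
      μ[(fun ω => g (Φ (n + 1) ω)) | F n] =ᵐ[μ] fun ω => Pop P g (Φ n ω))
    (π : Measure Z) (V : Z → ℝ) (hV1 : ∀ z, 1 ≤ V z)
    (herg : VUniformlyErgodic P π V)
    (f : Z → ℝ) (hf : Measurable f) (hfV : ∃ C, ∀ z, |f z ^ 2| ≤ C * V z) :
    ∃ K : ℝ, 0 ≤ K ∧ ∀ n, ∫⁻ ω, (‖f (Φ n ω)‖₊ : ℝ≥0∞) ^ (2:ℝ) ∂μ ≤ ENNReal.ofReal K := by
  obtain ⟨ρ, B, hρ, hB, herg⟩ := herg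
  obtain ⟨C, hC⟩ := hfV
  have hΦm : ∀ k, Measurable (Φ k) := fun k => (hadapted k).mono (F.le k) le_rfl
  have hV0 : (0:ℝ) < V z0 := lt_of_lt_of_le one_pos (hV1 z0)
  have hCV : 0 ≤ C * V z0 := le_trans (abs_nonneg _) (hC z0)
  have hC0 : 0 ≤ C := by nlinarith [hV1 z0]
  refine ⟨f z0 ^ 2 + 2 * (B * (C * V z0)), by positivity, fun n => ?_⟩
  -- the integral bound for truncations
  have key : ∀ M : ℕ, ∫ ω, min (f (Φ n ω) ^ 2) (M:ℝ) ∂μ ≤ f z0 ^ 2 + 2 * (B * (C * V z0)) := by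
    intro M
    set g : Z → ℝ := fun z => min (f z ^ 2) (M:ℝ) with hg
    have hgmeas : Measurable g := (hf.pow_const 2).min measurable_const
    have hgnn : ∀ z, 0 ≤ g z := fun z => le_min (sq_nonneg _) (Nat.cast_nonneg M)
    have hgb : ∀ z, |g z| ≤ (M:ℝ) := fun z => by
      rw [abs_of_nonneg (hgnn z)]; exact min_le_right _ _
    have hgV : ∀ z, |g z| ≤ C * V z := fun z => by
      rw [abs_of_nonneg (hgnn z)]
      exact le_trans (min_le_left _ _) (le_trans (le_abs_self _) (hC z))
    have hint : ∫ ω, g (Φ n ω) ∂μ = Pn P n g z0 :=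
      chain_exp P μ F Φ hadapted z0 hΦ0 hMarkov n g (M:ℝ) hgmeas hgb
    have e0 := herg g C hgmeas hgV 0 z0
    have en := herg g C hgmeas hgV n z0
    have hρn : ρ ^ n ≤ 1 := pow_le_one₀ (le_of_lt hρ.1) (le_of_lt hρ.2)
    have hπg : ∫ x, g x ∂π ≤ f z0 ^ 2 + B * (C * V z0) := by
      have h00 : Pn P 0 g z0 = g z0 := rfl
      rw [h00] at e0
      have : g z0 ≤ f z0 ^ 2 := min_le_left _ _
      have habs := abs_le.1 e0
      nlinarith
    have hBn : B * C * ρ ^ n * V z0 ≤ B * (C * V z0) := by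
      have h1 : B * C * ρ ^ n * V z0 = (B * C * V z0) * ρ ^ n := by ring
      have h2 : (B * C * V z0) * ρ ^ n ≤ (B * C * V z0) * 1 :=
        mul_le_mul_of_nonneg_left hρn (by positivity)
      linarith
    have habs := abs_le.1 en
    rw [hint]
    nlinarith
  -- now the lintegral computation
  have hmeasb : Measurable fun ω => f (Φ n ω) := hf.comp (hΦm n)
  have point : ∀ ω, (‖f (Φ n ω)‖₊ : ℝ≥0∞) ^ (2:ℝ)
      = ⨆ M : ℕ, ENNReal.ofReal (min (f (Φ n ω) ^ 2) (M:ℝ)) := by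
    intro ω
    rw [sup_min_ofReal (sq_nonneg _), ← enorm_eq_nnnorm, Real.enorm_eq_ofReal_abs,
      ENNReal.ofReal_rpow_of_nonneg (abs_nonneg _) (by norm_num)]
    congr 1
    rw [show (2:ℝ) = ((2:ℕ):ℝ) by norm_num, Real.rpow_natCast, sq_abs]
  calc ∫⁻ ω, (‖f (Φ n ω)‖₊ : ℝ≥0∞) ^ (2:ℝ) ∂μ
      = ∫⁻ ω, ⨆ M : ℕ, ENNReal.ofReal (min (f (Φ n ω) ^ 2) (M:ℝ)) ∂μ := by
        exact lintegral_congr point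
    _ = ⨆ M : ℕ, ∫⁻ ω, ENNReal.ofReal (min (f (Φ n ω) ^ 2) (M:ℝ)) ∂μ := by
        apply lintegral_iSup
        · intro M
          exact ENNReal.measurable_ofReal.comp ((hmeasb.pow_const 2).min measurable_const)
        · intro M M' hMM ω
          exact ENNReal.ofReal_le_ofReal (min_le_min le_rfl (Nat.cast_le.2 hMM))
    _ ≤ ENNReal.ofReal (f z0 ^ 2 + 2 * (B * (C * V z0))) := by
        refine iSup_le fun M => ?_
        have hint : Integrable (fun ω => min (f (Φ n ω) ^ 2) (M:ℝ)) μ := by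
          refine Integrable.mono' (integrable_const (M:ℝ))
            ((hmeasb.pow_const 2).min measurable_const).aestronglyMeasurable
            (ae_of_all _ fun ω => ?_)
          rw [Real.norm_eq_abs, abs_of_nonneg (le_min (sq_nonneg _) (Nat.cast_nonneg M))]
          exact min_le_right _ _
        rw [← MeasureTheory.ofReal_integral_eq_lintegral_ofReal hint
          (ae_of_all _ fun ω => le_min (sq_nonneg _) (Nat.cast_nonneg M))]
        exact ENNReal.ofReal_le_ofReal (key M)
end moment

def Dprod (lam : ℂ) (n k : ℕ) : ℂ := ∏ j ∈ Finset.Ioc k n, (1 + lam / (j:ℂ))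

def ckc (lam : ℂ) (k : ℕ) : ℂ := (1 + lam) / (((k:ℂ) - 1) * (k:ℂ))

lemma closed_form (lam : ℂ) (W S : ℕ → ℂ) (hW1 : W 1 = S 1)
    (hrec : ∀ n : ℕ, 1 ≤ n →
      W (n+1) = (1 + lam/((n:ℂ)+1)) * W n - ((1+lam)/((n:ℂ)*((n:ℂ)+1))) * S (n+1)) :
    ∀ n : ℕ, 1 ≤ n →
      W n = Dprod lam n 1 * S 1 - ∑ k ∈ Finset.Icc 2 n, Dprod lam n k * ckc lam k * S k := by
  intro n hn
  induction n, hn using Nat.le_induction with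
  | base => simp [Dprod, ckc, hW1]
  | succ n hn ih =>
    set c : ℂ := 1 + lam/((n:ℂ)+1) with hc
    have hcast : ((n+1 : ℕ) : ℂ) = (n:ℂ) + 1 := by push_cast; ring
    have hD1 : Dprod lam (n+1) 1 = Dprod lam n 1 * c := by
      rw [Dprod, Dprod, Finset.prod_Ioc_succ_top hn, hcast]
    have hDk : ∀ k ∈ Finset.Icc 2 n, Dprod lam (n+1) k = Dprod lam n k * c := by
      intro k hk
      rw [Dprod, Dprod, Finset.prod_Ioc_succ_top (Finset.mem_Icc.1 hk).2, hcast]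
    have hDtop : Dprod lam (n+1) (n+1) = 1 := by simp [Dprod]
    have hck : ckc lam (n+1) = (1+lam)/((n:ℂ)*((n:ℂ)+1)) := by
      rw [ckc, hcast]
      ring_nf
    rw [hrec n hn, ih, Finset.sum_Icc_succ_top (by omega : 2 ≤ n+1), hD1, hDtop, hck,
      Finset.sum_congr rfl (fun k hk => by rw [hDk k hk]; ring :
        ∀ k ∈ Finset.Icc 2 n, Dprod lam (n+1) k * ckc lam k * S k
          = c * (Dprod lam n k * ckc lam k * S k)),
      ← Finset.mul_sum]
    ring

lemma vsum_mulVec {d : ℕ} (A : Matrix (Fin d) (Fin d) ℝ) (v : Fin d → ℂ) (lam : ℂ)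
    (heig : Matrix.vecMul v (A.map Complex.ofReal) = lam • v) (x : Fin d → ℝ) :
    ∑ i, v i * ((A.mulVec x) i : ℂ) = lam * ∑ i, v i * (x i : ℂ) := by
  have h1 : ∀ i, ((A.mulVec x) i : ℂ) = ∑ j, (A i j : ℂ) * (x j : ℂ) := by
    intro i
    simp only [Matrix.mulVec, dotProduct]
    push_cast
    rfl
  have h2 : ∀ j, (∑ i, v i * (A i j : ℂ)) = lam * v j := by
    intro j
    have := congrFun heig j
    simpa [Matrix.vecMul, dotProduct, Matrix.map_apply] using this
  calc ∑ i, v i * ((A.mulVec x) i : ℂ)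
      = ∑ i, ∑ j, v i * (A i j : ℂ) * (x j : ℂ) := by
        simp_rw [h1, Finset.mul_sum]; ring_nf
    _ = ∑ j, ∑ i, v i * (A i j : ℂ) * (x j : ℂ) := Finset.sum_comm
    _ = ∑ j, (lam * v j) * (x j : ℂ) := by
        refine Finset.sum_congr rfl fun j _ => ?_
        rw [← Finset.sum_mul, h2]
    _ = lam * ∑ i, v i * (x i : ℂ) := by rw [Finset.mul_sum]; exact Finset.sum_congr rfl fun i _ => by ring

lemma log_le_sum_Ioc (k : ℕ) : ∀ n : ℕ, k ≤ n →
    Real.log (n+1) - Real.log (k+1) ≤ ∑ j ∈ Finset.Ioc k n, (1:ℝ)/j := by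
  intro n hn
  induction n, hn using Nat.le_induction with
  | base => simp
  | succ n hn ih =>
    rw [Finset.sum_Ioc_succ_top hn]
    have hstep : Real.log (n+1+1) - Real.log (n+1) ≤ 1/((n:ℝ)+1) := by
      have hpos : (0:ℝ) < (n:ℝ)+1 := by positivity
      have hpos2 : (0:ℝ) < (n:ℝ)+1+1 := by positivity
      have hlog : Real.log (((n:ℝ)+1+1)/((n:ℝ)+1)) ≤ ((n:ℝ)+1+1)/((n:ℝ)+1) - 1 :=
        Real.log_le_sub_one_of_pos (by positivity)
      rw [Real.log_div (ne_of_gt hpos2) (ne_of_gt hpos)] at hlog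
      have : ((n:ℝ)+1+1)/((n:ℝ)+1) - 1 = 1/((n:ℝ)+1) := by field_simp; ring
      linarith
    push_cast
    push_cast at ih
    linarith

lemma sum_invsq_le : ∀ n : ℕ, ∑ j ∈ Finset.Ioc 0 n, (1:ℝ)/(j:ℝ)^2 ≤ 2 := by
  have key : ∀ n : ℕ, 1 ≤ n → ∑ j ∈ Finset.Ioc 0 n, (1:ℝ)/(j:ℝ)^2 ≤ 2 - 1/(n:ℝ) := by
    intro n hn
    induction n, hn using Nat.le_induction with
    | base => norm_num
    | succ n hn ih =>
      rw [Finset.sum_Ioc_succ_top (Nat.zero_le _)]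
      have hpos : (0:ℝ) < (n:ℝ) := by exact_mod_cast hn
      have h1 : (1:ℝ)/((n:ℝ)+1)^2 ≤ 1/(n:ℝ) - 1/((n:ℝ)+1) := by
        rw [div_sub_div _ _ (ne_of_gt hpos) (by positivity)]
        rw [div_le_div_iff₀ (by positivity) (by positivity)]
        ring_nf
        nlinarith
      push_cast
      linarith
  intro n
  match n with
  | 0 => simp
  | (m+1) =>
    have h := key (m+1) (Nat.le_add_left 1 m)
    have h2 : (0:ℝ) < ((m:ℝ)+1) := by positivity
    push_cast at h
    nlinarith [one_div_pos.2 h2]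

lemma sum_invsq_Ioc_le (k n : ℕ) : ∑ j ∈ Finset.Ioc k n, (1:ℝ)/(j:ℝ)^2 ≤ 2 := by
  refine le_trans (Finset.sum_le_sum_of_subset_of_nonneg ?_ ?_) (sum_invsq_le n)
  · intro j hj
    simp only [Finset.mem_Ioc] at hj ⊢
    omega
  · intro j _ _; positivity

lemma Dprod_bound (ϱ0 u : ℝ) (hϱ0 : 0 < ϱ0) (k n : ℕ) (hk : 1 ≤ k) (hkn : k ≤ n) :
    ‖Dprod (Complex.ofReal (-ϱ0) + Complex.ofReal u * Complex.I) n k‖ ≤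
      Real.exp (ϱ0^2 + u^2 + ϱ0 * Real.log (k+1) - ϱ0 * Real.log (n+1)) := by
  set q : ℝ := ϱ0^2 + u^2 with hq
  have hq0 : 0 ≤ q := by positivity
  set lam : ℂ := Complex.ofReal (-ϱ0) + Complex.ofReal u * Complex.I with hlam
  have hfact : ∀ j : ℕ, 1 ≤ j → ‖(1 + lam/(j:ℂ))‖^2 = (1-ϱ0/j)^2 + (u/j)^2 := by
    intro j hj
    have hjR : ((j:ℝ)) ≠ 0 := by positivity
    have hrw : (1 + lam/(j:ℂ)) = (((1 - ϱ0/j : ℝ)):ℂ) + (((u/j : ℝ)):ℂ) * Complex.I := by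
      rw [hlam]
      have : ((j:ℂ)) ≠ 0 := by exact_mod_cast (show ((j:ℝ)) ≠ 0 from hjR)
      push_cast
      field_simp
      ring
    rw [hrw, Complex.sq_norm]
    exact Complex.normSq_add_mul_I _ _
  have hfact_le : ∀ j : ℕ, 1 ≤ j → ‖(1 + lam/(j:ℂ))‖^2 ≤ Real.exp (-(2*ϱ0)/j + q/(j:ℝ)^2) := by
    intro j hj
    rw [hfact j hj]
    have hjR : (0:ℝ) < (j:ℝ) := by exact_mod_cast hj
    have heq : (1-ϱ0/j)^2 + (u/j)^2 = (-(2*ϱ0)/j + q/(j:ℝ)^2) + 1 := by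
      rw [hq]; field_simp; ring
    rw [heq]
    exact Real.add_one_le_exp _
  have hnormsq : ‖Dprod lam n k‖^2 = ∏ j ∈ Finset.Ioc k n, ‖(1 + lam/(j:ℂ))‖^2 := by
    rw [Dprod, norm_prod, Finset.prod_pow]
  have hprodle : ‖Dprod lam n k‖^2 ≤
      Real.exp (∑ j ∈ Finset.Ioc k n, (-(2*ϱ0)/j + q/(j:ℝ)^2)) := by
    rw [hnormsq, Real.exp_sum]
    refine Finset.prod_le_prod (fun j _ => sq_nonneg _) (fun j hj => ?_)
    exact hfact_le j (le_trans hk (le_of_lt (Finset.mem_Ioc.1 hj).1))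
  have hsum : ∑ j ∈ Finset.Ioc k n, (-(2*ϱ0)/j + q/(j:ℝ)^2)
      ≤ -(2*ϱ0) * (Real.log (n+1) - Real.log (k+1)) + q * 2 := by
    rw [Finset.sum_add_distrib]
    have h1 : ∑ j ∈ Finset.Ioc k n, -(2*ϱ0)/(j:ℝ)
        = -(2*ϱ0) * ∑ j ∈ Finset.Ioc k n, (1:ℝ)/j := by
      rw [Finset.mul_sum]
      exact Finset.sum_congr rfl fun j _ => by ring
    have h2 : ∑ j ∈ Finset.Ioc k n, q/(j:ℝ)^2 = q * ∑ j ∈ Finset.Ioc k n, (1:ℝ)/(j:ℝ)^2 := by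
      rw [Finset.mul_sum]
      exact Finset.sum_congr rfl fun j _ => by ring
    rw [h1, h2]
    have hlog := log_le_sum_Ioc k n hkn
    have hsq := sum_invsq_Ioc_le k n
    have hmono := mul_le_mul_of_nonpos_left hlog (by linarith : -(2*ϱ0) ≤ 0)
    nlinarith [mul_le_mul_of_nonneg_left hsq hq0]
  have hD2 : ‖Dprod lam n k‖^2 ≤
      Real.exp (q + ϱ0 * Real.log (k+1) - ϱ0 * Real.log (n+1))^2 := by
    have : Real.exp (q + ϱ0 * Real.log (k+1) - ϱ0 * Real.log (n+1))^2
        = Real.exp (2*q + 2*ϱ0 * Real.log (k+1) - 2*ϱ0 * Real.log (n+1)) := by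
      rw [sq, ← Real.exp_add]; ring_nf
    rw [this]
    refine le_trans hprodle (Real.exp_le_exp.2 ?_)
    linarith [hsum]
  have h1 : ‖Dprod lam n k‖ ≤ Real.exp (q + ϱ0 * Real.log (k+1) - ϱ0 * Real.log (n+1)) := by
    have ha := Real.sqrt_le_sqrt hD2
    rwa [Real.sqrt_sq (norm_nonneg _), Real.sqrt_sq (Real.exp_nonneg _)] at ha
  exact le_trans h1 (le_of_eq (by rw [hq]))

lemma tail_sum (lam : ℂ) (ϱ0 : ℝ) (hϱ0 : 0 < ϱ0) (hhalf : ϱ0 ≤ 1/2) :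
    ∃ T : ℝ, 0 ≤ T ∧ ∀ n : ℕ,
      ∑ k ∈ Finset.Icc 2 n, Real.exp (ϱ0 * Real.log (k+1)) * ‖ckc lam k‖ ≤ T := by
  have hsumm : Summable (fun k : ℕ => (k:ℝ) ^ (-(3/2) : ℝ)) :=
    Real.summable_nat_rpow.2 (by norm_num)
  set L : ℝ := ‖(1:ℂ)+lam‖ * (2 * Real.sqrt 2) with hL
  have hL0 : 0 ≤ L := by positivity
  have htsum0 : 0 ≤ ∑' k : ℕ, (k:ℝ) ^ (-(3/2) : ℝ) :=
    tsum_nonneg fun k => Real.rpow_nonneg (Nat.cast_nonneg k) _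
  refine ⟨L * ∑' k : ℕ, (k:ℝ) ^ (-(3/2) : ℝ), mul_nonneg hL0 htsum0, fun n => ?_⟩
  have hterm : ∀ k ∈ Finset.Icc 2 n,
      Real.exp (ϱ0 * Real.log (k+1)) * ‖ckc lam k‖ ≤ L * (k:ℝ) ^ (-(3/2) : ℝ) := by
    intro k hk
    have hk2 : (2:ℝ) ≤ (k:ℝ) := by exact_mod_cast (Finset.mem_Icc.1 hk).1
    have hkpos : (0:ℝ) < (k:ℝ) := by linarith
    have e1 : Real.exp (ϱ0 * Real.log (k+1)) ≤ Real.exp ((1/2) * Real.log ((k:ℝ)+1)) := by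
      apply Real.exp_le_exp.2
      exact mul_le_mul_of_nonneg_right hhalf (Real.log_nonneg (by linarith))
    have e2 : Real.exp ((1/2) * Real.log ((k:ℝ)+1)) = Real.sqrt ((k:ℝ)+1) := by
      rw [Real.sqrt_eq_rpow, Real.rpow_def_of_pos (by positivity)]
      ring_nf
    have e3 : Real.sqrt ((k:ℝ)+1) ≤ Real.sqrt 2 * Real.sqrt (k:ℝ) := by
      rw [← Real.sqrt_mul (by norm_num : (0:ℝ) ≤ 2)]
      exact Real.sqrt_le_sqrt (by linarith)
    have e4 : ‖ckc lam k‖ = ‖(1:ℂ)+lam‖ / (((k:ℝ)-1) * k) := by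
      rw [ckc, norm_div, norm_mul]
      have h1 : ((k:ℂ) - 1) = (((k:ℝ) - 1 : ℝ) : ℂ) := by push_cast; ring
      have h2 : ((k:ℂ)) = (((k:ℝ)) : ℂ) := by push_cast; ring
      rw [h1, h2, Complex.norm_real, Complex.norm_real, Real.norm_eq_abs, Real.norm_eq_abs,
        abs_of_nonneg (by linarith : (0:ℝ) ≤ (k:ℝ)-1), abs_of_nonneg (le_of_lt hkpos)]
    have e5 : ‖(1:ℂ)+lam‖ / (((k:ℝ)-1) * k) ≤ ‖(1:ℂ)+lam‖ * (2 / (k:ℝ)^2) := by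
      have hd : (1:ℝ)/(((k:ℝ)-1)*k) ≤ 2/(k:ℝ)^2 := by
        rw [div_le_div_iff₀ (by nlinarith) (by positivity)]
        nlinarith
      rw [div_eq_mul_one_div]
      exact mul_le_mul_of_nonneg_left hd (norm_nonneg _)
    have e6 : Real.sqrt (k:ℝ) / (k:ℝ)^2 = (k:ℝ) ^ (-(3/2) : ℝ) := by
      rw [Real.sqrt_eq_rpow, ← Real.rpow_natCast (k:ℝ) 2, ← Real.rpow_sub hkpos]
      norm_num
    calc Real.exp (ϱ0 * Real.log (k+1)) * ‖ckc lam k‖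
        ≤ (Real.sqrt 2 * Real.sqrt (k:ℝ)) * (‖(1:ℂ)+lam‖ * (2 / (k:ℝ)^2)) := by
          refine mul_le_mul (le_trans e1 (e2 ▸ e3)) (e4 ▸ e5) (norm_nonneg _) (by positivity)
      _ = L * (Real.sqrt (k:ℝ) / (k:ℝ)^2) := by rw [hL]; ring
      _ = L * (k:ℝ) ^ (-(3/2) : ℝ) := by rw [e6]
  calc ∑ k ∈ Finset.Icc 2 n, Real.exp (ϱ0 * Real.log (k+1)) * ‖ckc lam k‖
      ≤ ∑ k ∈ Finset.Icc 2 n, L * (k:ℝ) ^ (-(3/2) : ℝ) := Finset.sum_le_sum hterm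
    _ = L * ∑ k ∈ Finset.Icc 2 n, (k:ℝ) ^ (-(3/2) : ℝ) := (Finset.mul_sum _ _ _).symm
    _ ≤ L * ∑' k : ℕ, (k:ℝ) ^ (-(3/2) : ℝ) := by
        refine mul_le_mul_of_nonneg_left ?_ hL0
        exact Summable.sum_le_tsum _ (fun k _ => Real.rpow_nonneg (Nat.cast_nonneg k) _) hsumm

lemma ofReal_abs_sq (z : ℂ) :
    ENNReal.ofReal (‖z‖ ^ 2) = (‖z‖₊ : ℝ≥0∞) ^ (2:ℝ) := by
  rw [← enorm_eq_nnnorm, ← ofReal_norm_eq_enorm,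
    ENNReal.ofReal_rpow_of_nonneg (norm_nonneg _) (by norm_num)]
  congr 1
  rw [show (2:ℝ) = ((2:ℕ):ℝ) by norm_num, Real.rpow_natCast]

lemma integral_abs_sq_eq {Ω : Type*} [MeasurableSpace Ω] (μ : Measure Ω) (G : Ω → ℂ)
    (hG : Measurable G) :
    ∫ ω, ‖G ω‖ ^ 2 ∂μ = ((eLpNorm G 2 μ) ^ (2:ℝ)).toReal := by
  have hm : Measurable fun ω => ‖G ω‖ := hG.norm
  rw [integral_eq_lintegral_of_nonneg_ae (ae_of_all _ fun ω => sq_nonneg _)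
    ((hm.pow_const 2).aestronglyMeasurable)]
  congr 1
  rw [eLpNorm_eq_lintegral_rpow_enorm_toReal (by norm_num) (by norm_num)]
  have h2 : ((2:ℝ≥0∞)).toReal = (2:ℝ) := by norm_num
  rw [h2, ← ENNReal.rpow_mul]
  norm_num


theorem stmt13
    {Z : Type*} [MeasurableSpace Z] (P : Kernel Z Z) [IsMarkovKernel P]
    (π : Measure Z) [IsProbabilityMeasure π]
    (hinv : π.bind (fun z => P z) = π)
    (huniq : ∀ π' : Measure Z, IsProbabilityMeasure π' → π'.bind (fun z => P z) = π' → π' = π)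
    (V : Z → ℝ) (hVmeas : Measurable V) (hV1 : ∀ z, 1 ≤ V z)
    (herg : VUniformlyErgodic P π V)
    {Ω : Type*} {m0 : MeasurableSpace Ω} (μ : Measure Ω) [IsProbabilityMeasure μ]
    (F : Filtration ℕ m0) (Φ : ℕ → Ω → Z)
    (hadapted : ∀ n, Measurable[F n] (Φ n))
    (z0 : Z) (hΦ0 : ∀ ω, Φ 0 ω = z0)
    (hMarkov : ∀ (g : Z → ℝ), Measurable g → (∀ z, |g z| ≤ 1) → ∀ n,
      μ[(fun ω => g (Φ (n + 1) ω)) | F n] =ᵐ[μ] fun ω => Pop P g (Φ n ω))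
    {d : ℕ} (A : Matrix (Fin d) (Fin d) ℝ) (hA : IsHurwitz A)
    (fstar : Z → Fin d → ℝ) (hfmeas : ∀ i, Measurable fun z => fstar z i)
    (hfV : ∀ i, BddV V fun z => fstar z i ^ 2)
    (hfmean : ∀ i, ∫ z, fstar z i ∂π = 0)
    (fhat : Z → Fin d → ℝ) (hfhmeas : ∀ i, Measurable fun z => fhat z i)
    (hfhV : ∀ i, BddV V fun z => fhat z i ^ 2)
    (hfhmean : ∀ i, ∫ z, fhat z i ∂π = 0)
    (hPoisson : ∀ z i, Pop P (fun y => fhat y i) z = fhat z i - fstar z i)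
    (Xi : ℕ → Ω → Fin d → ℝ) (hXi1 : ∀ ω, Xi 1 ω = fhat (Φ 1 ω))
    (hXirec : ∀ n : ℕ, 1 ≤ n → ∀ ω, Xi (n + 1) ω = Xi n ω + ((n : ℝ) + 1)⁻¹ •
      (A.mulVec (Xi n ω) - ((n : ℝ))⁻¹ • ((1 + A).mulVec (fhat (Φ (n + 1) ω)))))
    (ϱ0 u : ℝ) (hϱ0 : 0 < ϱ0) (hϱ0half : ϱ0 < 1 / 2)
    (v : Fin d → ℂ) (hv : v ≠ 0)
    (heig : Matrix.vecMul v (A.map Complex.ofReal)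
      = (Complex.ofReal (-ϱ0) + Complex.ofReal u * Complex.I) • v)
    (hSv : ((SigmaDelta P π fhat).map Complex.ofReal).mulVec v ≠ 0) :
    IsBoundedUnder (· ≤ ·) atTop (fun n : ℕ =>
      (n : ℝ) ^ (2 * ϱ0) * ∫ ω, ‖∑ i, v i * (Xi n ω i : ℂ)‖ ^ 2 ∂μ) := by
  classical
  set lam : ℂ := Complex.ofReal (-ϱ0) + Complex.ofReal u * Complex.I with hlamdef
  have hΦm : ∀ k, Measurable (Φ k) := fun k => (hadapted k).mono (F.le k) le_rfl
  -- uniform second-moment bounds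
  have hKex : ∀ i : Fin d, ∃ K : ℝ, 0 ≤ K ∧ ∀ n,
      ∫⁻ ω, (‖fhat (Φ n ω) i‖₊ : ℝ≥0∞) ^ (2:ℝ) ∂μ ≤ ENNReal.ofReal K :=
    fun i => moment_bound P μ F Φ hadapted z0 hΦ0 hMarkov π V hV1 herg
      (fun z => fhat z i) (hfhmeas i) (hfhV i)
  choose K hK0 hKb using hKex
  set κ : ℝ≥0∞ := ∑ i : Fin d, (‖v i‖₊ : ℝ≥0∞) * (ENNReal.ofReal (K i)) ^ ((1:ℝ)/2) with hκdef
  have hκfin : κ ≠ ⊤ := by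
    rw [hκdef]
    refine ne_of_lt (ENNReal.sum_lt_top.2 fun i _ => ?_)
    exact ENNReal.mul_lt_top ENNReal.coe_lt_top
      (ENNReal.rpow_lt_top_of_nonneg (by norm_num) ENNReal.ofReal_ne_top)
  set S : ℕ → Ω → ℂ := fun k ω => ∑ i, v i * ((fhat (Φ k ω) i : ℝ) : ℂ) with hSdef
  have hSmeas : ∀ k, Measurable (S k) := by
    intro k
    apply Finset.measurable_sum
    intro i _
    exact measurable_const.mul (Complex.measurable_ofReal.comp ((hfhmeas i).comp (hΦm k)))
  have hSlp : ∀ k, eLpNorm (S k) 2 μ ≤ κ := by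
    intro k
    have h1 : S k = ∑ i : Fin d, (v i • fun ω => ((fhat (Φ k ω) i : ℝ) : ℂ)) := by
      funext ω
      simp [hSdef, Finset.sum_apply, Pi.smul_apply, smul_eq_mul]
    rw [h1, hκdef]
    refine le_trans (eLpNorm_sum_le (fun i _ =>
      ((Complex.measurable_ofReal.comp ((hfhmeas i).comp (hΦm k))).const_smul
        (v i)).aestronglyMeasurable) one_le_two) ?_
    refine Finset.sum_le_sum fun i _ => ?_
    rw [eLpNorm_const_smul]
    refine mul_le_mul_right ?_ _
    have h3 : eLpNorm (fun ω => ((fhat (Φ k ω) i : ℝ):ℂ)) 2 μ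
        = eLpNorm (fun ω => fhat (Φ k ω) i) 2 μ :=
      eLpNorm_congr_norm_ae (ae_of_all _ fun ω => by rw [Complex.norm_real])
    rw [h3, eLpNorm_eq_lintegral_rpow_enorm_toReal (by norm_num) (by norm_num)]
    have h4 : ((2:ℝ≥0∞)).toReal = (2:ℝ) := by norm_num
    rw [h4]
    exact ENNReal.rpow_le_rpow (hKb i k) (by norm_num)
  -- eigen-algebra
  have hAv : ∀ x : Fin d → ℝ, ∑ i, v i * ((A.mulVec x) i : ℂ) = lam * ∑ i, v i * (x i:ℂ) :=
    vsum_mulVec A v lam heig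
  have h1A : ∀ x : Fin d → ℝ,
      ∑ i, v i * (((1+A).mulVec x) i : ℂ) = (1+lam) * ∑ i, v i * (x i:ℂ) := by
    intro x
    have hx : (1+A).mulVec x = x + A.mulVec x := by rw [Matrix.add_mulVec, Matrix.one_mulVec]
    have hterm : ∀ i : Fin d, v i * (((x + A.mulVec x) i : ℝ):ℂ)
        = v i * ((x i:ℝ):ℂ) + v i * ((A.mulVec x i : ℝ):ℂ) := by
      intro i
      simp only [Pi.add_apply]
      push_cast
      ring
    rw [hx, Finset.sum_congr rfl fun i _ => hterm i, Finset.sum_add_distrib, hAv]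
    ring
  -- the recursion, per ω
  have hrecω : ∀ n : ℕ, 1 ≤ n → ∀ ω, (∑ i, v i * ((Xi (n+1) ω i : ℝ) : ℂ))
      = (1 + lam/((n:ℂ)+1)) * (∑ i, v i * ((Xi n ω i : ℝ) : ℂ))
        - ((1+lam)/((n:ℂ)*((n:ℂ)+1))) * S (n+1) ω := by
    intro n hn ω
    have hn0 : ((n:ℂ)) ≠ 0 := Nat.cast_ne_zero.2 (by omega)
    have hn1 : ((n:ℂ)+1) ≠ 0 := Nat.cast_add_one_ne_zero n
    have hXin := hXirec n hn ω
    have hterm : ∀ i, ((Xi (n+1) ω i : ℝ) : ℂ)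
        = ((Xi n ω i : ℝ):ℂ) + ((n:ℂ)+1)⁻¹ * (((A.mulVec (Xi n ω) i : ℝ) : ℂ)
            - (n:ℂ)⁻¹ * ((((1+A).mulVec (fhat (Φ (n+1) ω))) i : ℝ):ℂ)) := by
      intro i
      rw [hXin]
      simp only [Pi.add_apply, Pi.smul_apply, Pi.sub_apply, smul_eq_mul]
      push_cast
      ring
    show (∑ i, v i * ((Xi (n+1) ω i : ℝ):ℂ))
        = (1 + lam/((n:ℂ)+1)) * (∑ i, v i * ((Xi n ω i : ℝ):ℂ))
          - ((1+lam)/((n:ℂ)*((n:ℂ)+1))) * (∑ i, v i * ((fhat (Φ (n+1) ω) i : ℝ):ℂ))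
    have hsum : (∑ i, v i * ((Xi (n+1) ω i : ℝ):ℂ)) = (∑ i, v i * ((Xi n ω i:ℝ):ℂ))
        + ((n:ℂ)+1)⁻¹ * (∑ i, v i * ((A.mulVec (Xi n ω) i:ℝ):ℂ))
        - (((n:ℂ)+1)⁻¹ * (n:ℂ)⁻¹) * (∑ i, v i * (((1+A).mulVec (fhat (Φ (n+1) ω)) i:ℝ):ℂ)) := by
      calc (∑ i, v i * ((Xi (n+1) ω i : ℝ):ℂ))
          = ∑ i, (v i * ((Xi n ω i:ℝ):ℂ)
            + ((n:ℂ)+1)⁻¹ * (v i * ((A.mulVec (Xi n ω) i:ℝ):ℂ))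
            - (((n:ℂ)+1)⁻¹ * (n:ℂ)⁻¹) * (v i * (((1+A).mulVec (fhat (Φ (n+1) ω)) i:ℝ):ℂ))) := by
            refine Finset.sum_congr rfl fun i _ => ?_
            rw [hterm i]
            ring
        _ = _ := by
            rw [Finset.sum_sub_distrib, Finset.sum_add_distrib, ← Finset.mul_sum, ← Finset.mul_sum]
    rw [hsum, hAv (Xi n ω), h1A (fhat (Φ (n+1) ω))]
    field_simp
  -- closed form per ω
  have hCF : ∀ n : ℕ, 1 ≤ n → ∀ ω, (∑ i, v i * ((Xi n ω i : ℝ) : ℂ))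
      = Dprod lam n 1 * S 1 ω
        - ∑ k ∈ Finset.Icc 2 n, Dprod lam n k * ckc lam k * S k ω := by
    intro n hn ω
    exact closed_form lam (fun m => ∑ i, v i * ((Xi m ω i : ℝ) : ℂ)) (fun m => S m ω)
      (by simp [hSdef, hXi1]) (fun m hm => hrecω m hm ω) n hn
  -- constants
  obtain ⟨T, hT0, hTb⟩ := tail_sum lam ϱ0 hϱ0 (le_of_lt hϱ0half)
  have hE10 : (0:ℝ) < Real.exp (ϱ0^2+u^2 + ϱ0 * Real.log 2) := Real.exp_pos _
  have hE20 : (0:ℝ) < Real.exp (ϱ0^2+u^2) := Real.exp_pos _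
  set R : ℝ := Real.exp (ϱ0^2+u^2 + ϱ0 * Real.log 2) + Real.exp (ϱ0^2+u^2) * T with hRdef
  have hR0 : 0 ≤ R := by positivity
  have hrnpos : ∀ n : ℕ, (0:ℝ) < Real.exp (-(ϱ0 * Real.log ((n:ℝ)+1))) := fun n => Real.exp_pos _
  -- scalar coefficient bound
  have hscal : ∀ n : ℕ, 1 ≤ n →
      ‖Dprod lam n 1‖ + ∑ k ∈ Finset.Icc 2 n, ‖Dprod lam n k * ckc lam k‖
        ≤ R * Real.exp (-(ϱ0 * Real.log ((n:ℝ)+1))) := by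
    intro n hn
    have hD1 := Dprod_bound ϱ0 u hϱ0 1 n le_rfl hn
    rw [← hlamdef] at hD1
    have h12 : ((1:ℕ):ℝ) + 1 = 2 := by norm_num
    rw [h12] at hD1
    have hD1' : ‖Dprod lam n 1‖ ≤ Real.exp (ϱ0^2+u^2 + ϱ0 * Real.log 2)
        * Real.exp (-(ϱ0 * Real.log ((n:ℝ)+1))) := by
      refine le_trans hD1 (le_of_eq ?_)
      rw [← Real.exp_add]
      ring_nf
    have hterm2 : ∀ k ∈ Finset.Icc 2 n, ‖Dprod lam n k * ckc lam k‖
        ≤ (Real.exp (ϱ0^2+u^2) * Real.exp (-(ϱ0 * Real.log ((n:ℝ)+1))))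
          * (Real.exp (ϱ0 * Real.log ((k:ℝ)+1)) * ‖ckc lam k‖) := by
      intro k hk
      obtain ⟨hk2, hkn⟩ := Finset.mem_Icc.1 hk
      have hDk := Dprod_bound ϱ0 u hϱ0 k n (by omega) hkn
      rw [← hlamdef] at hDk
      have heq : Real.exp (ϱ0^2+u^2 + ϱ0 * Real.log ((k:ℝ)+1) - ϱ0 * Real.log ((n:ℝ)+1))
          = Real.exp (ϱ0^2+u^2) * Real.exp (-(ϱ0 * Real.log ((n:ℝ)+1)))
            * Real.exp (ϱ0 * Real.log ((k:ℝ)+1)) := by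
        rw [← Real.exp_add, ← Real.exp_add]
        ring_nf
      rw [norm_mul]
      calc ‖Dprod lam n k‖ * ‖ckc lam k‖
          ≤ (Real.exp (ϱ0^2+u^2) * Real.exp (-(ϱ0 * Real.log ((n:ℝ)+1)))
              * Real.exp (ϱ0 * Real.log ((k:ℝ)+1))) * ‖ckc lam k‖ := by
            refine mul_le_mul_of_nonneg_right ?_ (norm_nonneg _)
            rw [← heq]
            exact hDk
        _ = (Real.exp (ϱ0^2+u^2) * Real.exp (-(ϱ0 * Real.log ((n:ℝ)+1))))
              * (Real.exp (ϱ0 * Real.log ((k:ℝ)+1)) * ‖ckc lam k‖) := by ring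
    have hsum2 : ∑ k ∈ Finset.Icc 2 n, ‖Dprod lam n k * ckc lam k‖
        ≤ (Real.exp (ϱ0^2+u^2) * Real.exp (-(ϱ0 * Real.log ((n:ℝ)+1)))) * T := by
      refine le_trans (Finset.sum_le_sum hterm2) ?_
      rw [← Finset.mul_sum]
      exact mul_le_mul_of_nonneg_left (hTb n) (by positivity)
    rw [hRdef]
    have := hrnpos n
    nlinarith
  -- L² bound on the closed form
  set G : ℕ → Ω → ℂ := fun n ω => Dprod lam n 1 * S 1 ω
      - ∑ k ∈ Finset.Icc 2 n, Dprod lam n k * ckc lam k * S k ω with hGdef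
  have hGmeas : ∀ n, Measurable (G n) := by
    intro n
    exact ((hSmeas 1).const_mul _).sub
      (Finset.measurable_sum _ fun k _ => (hSmeas k).const_mul _)
  have hGlp : ∀ n : ℕ, 1 ≤ n → eLpNorm (G n) 2 μ
      ≤ ENNReal.ofReal (R * Real.exp (-(ϱ0 * Real.log ((n:ℝ)+1)))) * κ := by
    intro n hn
    have step1 : eLpNorm (G n) 2 μ ≤ (‖Dprod lam n 1‖₊ : ℝ≥0∞) * κ
        + ∑ k ∈ Finset.Icc 2 n, (‖Dprod lam n k * ckc lam k‖₊ : ℝ≥0∞) * κ := by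
      have hsub := eLpNorm_sub_le (μ := μ) (p := (2:ℝ≥0∞))
        (f := fun ω => Dprod lam n 1 * S 1 ω)
        (g := fun ω => ∑ k ∈ Finset.Icc 2 n, Dprod lam n k * ckc lam k * S k ω)
        ((hSmeas 1).const_mul _).aestronglyMeasurable
        (Finset.measurable_sum _ fun k _ => (hSmeas k).const_mul _).aestronglyMeasurable
        one_le_two
      refine le_trans hsub (add_le_add ?_ ?_)
      · have hfn : (fun ω => Dprod lam n 1 * S 1 ω) = (Dprod lam n 1 • S 1) := by
          funext ω
          simp [Pi.smul_apply, smul_eq_mul]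
        rw [hfn, eLpNorm_const_smul]
        exact mul_le_mul_right (hSlp 1) _
      · have hfn : (fun ω => ∑ k ∈ Finset.Icc 2 n, Dprod lam n k * ckc lam k * S k ω)
            = ∑ k ∈ Finset.Icc 2 n, ((Dprod lam n k * ckc lam k) • S k) := by
          funext ω
          simp [Finset.sum_apply, Pi.smul_apply, smul_eq_mul]
        rw [hfn]
        refine le_trans (eLpNorm_sum_le
          (fun k _ => ((hSmeas k).const_smul _).aestronglyMeasurable) one_le_two) ?_
        refine Finset.sum_le_sum fun k _ => ?_
        rw [eLpNorm_const_smul]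
        exact mul_le_mul_right (hSlp k) _
    refine le_trans step1 ?_
    rw [← Finset.sum_mul, ← add_mul]
    refine mul_le_mul_left ?_ κ
    have hcoe : ENNReal.ofReal (‖Dprod lam n 1‖
            + ∑ k ∈ Finset.Icc 2 n, ‖Dprod lam n k * ckc lam k‖)
        = ((‖Dprod lam n 1‖₊ : ℝ≥0∞)
            + ∑ k ∈ Finset.Icc 2 n, (‖Dprod lam n k * ckc lam k‖₊ : ℝ≥0∞)) := by
      rw [ENNReal.ofReal_add (norm_nonneg _) (Finset.sum_nonneg fun k _ => norm_nonneg _),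
        ENNReal.ofReal_sum_of_nonneg (fun k _ => norm_nonneg _),
        ofReal_norm_eq_enorm, enorm_eq_nnnorm]
      congr 1
      exact Finset.sum_congr rfl fun k _ => (ofReal_norm_eq_enorm _).trans (enorm_eq_nnnorm _)
    rw [← hcoe]
    exact ENNReal.ofReal_le_ofReal (hscal n hn)
  -- final assembly
  have hκ2 : (0:ℝ) ≤ (κ ^ (2:ℝ)).toReal := ENNReal.toReal_nonneg
  refine isBoundedUnder_of_eventually_le (a := R^2 * (κ ^ (2:ℝ)).toReal) ?_
  filter_upwards [eventually_ge_atTop 1] with n hn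
  have hfeq : (fun ω => ‖∑ i, v i * ((Xi n ω i : ℝ) : ℂ)‖ ^ 2)
      = fun ω => ‖G n ω‖ ^ 2 := by
    funext ω
    rw [hCF n hn ω]
  rw [hfeq, integral_abs_sq_eq μ (G n) (hGmeas n)]
  have h1 : ((eLpNorm (G n) 2 μ) ^ (2:ℝ)).toReal
      ≤ ((ENNReal.ofReal (R * Real.exp (-(ϱ0 * Real.log ((n:ℝ)+1)))) * κ) ^ (2:ℝ)).toReal := by
    apply ENNReal.toReal_mono
    · exact ENNReal.rpow_ne_top_of_nonneg (by norm_num)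
        (ENNReal.mul_ne_top ENNReal.ofReal_ne_top hκfin)
    · exact ENNReal.rpow_le_rpow (hGlp n hn) (by norm_num)
  have hRrn0 : 0 ≤ R * Real.exp (-(ϱ0 * Real.log ((n:ℝ)+1))) :=
    mul_nonneg hR0 (le_of_lt (hrnpos n))
  have h2 : ((ENNReal.ofReal (R * Real.exp (-(ϱ0 * Real.log ((n:ℝ)+1)))) * κ) ^ (2:ℝ)).toReal
      = (R * Real.exp (-(ϱ0 * Real.log ((n:ℝ)+1))))^2 * (κ ^ (2:ℝ)).toReal := by
    rw [ENNReal.mul_rpow_of_nonneg _ _ (by norm_num : (0:ℝ) ≤ 2), ENNReal.toReal_mul]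
    congr 1
    rw [ENNReal.ofReal_rpow_of_nonneg hRrn0 (by norm_num : (0:ℝ) ≤ 2),
      ENNReal.toReal_ofReal (Real.rpow_nonneg hRrn0 _),
      show (2:ℝ) = ((2:ℕ):ℝ) by norm_num, Real.rpow_natCast]
  have hrn1 : (n:ℝ)^(2*ϱ0) * (Real.exp (-(ϱ0 * Real.log ((n:ℝ)+1))))^2 ≤ 1 := by
    have hnpos : (0:ℝ) < (n:ℝ)+1 := by positivity
    have ha : (n:ℝ)^(2*ϱ0) ≤ ((n:ℝ)+1)^(2*ϱ0) :=
      Real.rpow_le_rpow (Nat.cast_nonneg n) (by linarith) (by positivity)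
    have hb : ((n:ℝ)+1)^(2*ϱ0) = Real.exp (Real.log ((n:ℝ)+1) * (2*ϱ0)) :=
      Real.rpow_def_of_pos hnpos _
    have hc : (Real.exp (-(ϱ0 * Real.log ((n:ℝ)+1))))^2
        = Real.exp (-(ϱ0 * Real.log ((n:ℝ)+1)) * 2) := by
      rw [sq, ← Real.exp_add]
      ring_nf
    calc (n:ℝ)^(2*ϱ0) * (Real.exp (-(ϱ0 * Real.log ((n:ℝ)+1))))^2
        ≤ ((n:ℝ)+1)^(2*ϱ0) * (Real.exp (-(ϱ0 * Real.log ((n:ℝ)+1))))^2 :=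
          mul_le_mul_of_nonneg_right ha (sq_nonneg _)
      _ = Real.exp (Real.log ((n:ℝ)+1) * (2*ϱ0) + -(ϱ0 * Real.log ((n:ℝ)+1)) * 2) := by
          rw [hb, hc, ← Real.exp_add]
      _ = 1 := by
          rw [show Real.log ((n:ℝ)+1) * (2*ϱ0) + -(ϱ0 * Real.log ((n:ℝ)+1)) * 2 = 0 by ring,
            Real.exp_zero]
  calc (n:ℝ)^(2*ϱ0) * ((eLpNorm (G n) 2 μ) ^ (2:ℝ)).toReal
      ≤ (n:ℝ)^(2*ϱ0) * ((R * Real.exp (-(ϱ0 * Real.log ((n:ℝ)+1))))^2 * (κ ^ (2:ℝ)).toReal) := by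
        refine mul_le_mul_of_nonneg_left (le_trans h1 (le_of_eq h2))
          (Real.rpow_nonneg (Nat.cast_nonneg n) _)
    _ = (R^2 * (κ ^ (2:ℝ)).toReal)
          * ((n:ℝ)^(2*ϱ0) * (Real.exp (-(ϱ0 * Real.log ((n:ℝ)+1))))^2) := by ring
    _ ≤ (R^2 * (κ ^ (2:ℝ)).toReal) * 1 := by
        refine mul_le_mul_of_nonneg_left hrn1 (by positivity)
    _ = R^2 * (κ ^ (2:ℝ)).toReal := by ring
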